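/- For matrices X, Y ∈ M_n(ℂ), if X + Y = W|X+Y| is a polar decomposition with W unitary, then |X+Y| ≤ (|X| + |Y| + W*(|X*| + |Y*|)W)/2 in the Loewner order. -/

import Mathlib

open Matrix
open scoped ComplexOrder

/-- The absolute value `|X| = (X* X)^{1/2}` of a complex matrix. -/
noncomputable def matAbs {n : ℕ} (X : Matrix (Fin n) (Fin n) ℂ) : Matrix (Fin n) (Fin n) ℂ :=
  ((Matrix.posSemidef_conjTranspose_mul_self X).1.eigenvectorUnitary : Matrix (Fin n) (Fin n) ℂ) *
    diagonal (((↑) : ℝ → ℂ) ∘ (√·) ∘ (Matrix.posSemidef_conjTranspose_mul_self X).1.eigenvalues) *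
    (star (Matrix.posSemidef_conjTranspose_mul_self X).1.eigenvectorUnitary : Matrix (Fin n) (Fin n) ℂ)

lemma matAbs_eq_cfc {n : ℕ} (X : Matrix (Fin n) (Fin n) ℂ) :
    matAbs X = cfc Real.sqrt (Xᴴ * X) := by
  rw [(Matrix.posSemidef_conjTranspose_mul_self X).1.cfc_eq, Matrix.IsHermitian.cfc,
    Unitary.conjStarAlgAut_apply]
  rfl

open scoped MatrixOrder in
lemma matAbs_psd {n : ℕ} (X : Matrix (Fin n) (Fin n) ℂ) : (matAbs X).PosSemidef := by
  rw [matAbs_eq_cfc, ← cfcₙ_eq_cfc (hf0 := Real.sqrt_zero), ← CFC.sqrt_eq_real_sqrt _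
    (nonneg_iff_posSemidef.mpr (Matrix.posSemidef_conjTranspose_mul_self X))]
  exact nonneg_iff_posSemidef.mp (CFC.sqrt_nonneg _)

open scoped MatrixOrder in
lemma matAbs_unique {n : ℕ} (X B : Matrix (Fin n) (Fin n) ℂ) (hB : B.PosSemidef)
    (h : B ^ 2 = Xᴴ * X) : matAbs X = B := by
  rw [matAbs_eq_cfc, ← cfcₙ_eq_cfc (hf0 := Real.sqrt_zero), ← CFC.sqrt_eq_real_sqrt _
    (nonneg_iff_posSemidef.mpr (Matrix.posSemidef_conjTranspose_mul_self X))]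
  exact CFC.sqrt_unique (by rw [← sq]; exact h) (nonneg_iff_posSemidef.mpr hB)

lemma matAbs_key {n : ℕ} (X W : Matrix (Fin n) (Fin n) ℂ) :
    (matAbs X + Wᴴ * matAbs Xᴴ * W - Xᴴ * W - Wᴴ * X).PosSemidef := by
  set H : Matrix (Fin n) (Fin n) ℂ := X * Xᴴ with hHdef
  have hHpsd : H.PosSemidef := Matrix.posSemidef_self_mul_conjTranspose X
  have ha : IsSelfAdjoint H := hHpsd.isHermitian
  have hcont : ∀ f : ℝ → ℝ, ContinuousOn f (spectrum ℝ H) :=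
    fun f => Matrix.finite_real_spectrum.continuousOn f
  have hspec : ∀ x ∈ spectrum ℝ H, 0 ≤ x := by
    intro x hx
    rw [Matrix.IsHermitian.spectrum_real_eq_range_eigenvalues hHpsd.1] at hx
    obtain ⟨i, rfl⟩ := hx
    exact hHpsd.eigenvalues_nonneg i
  have hid : cfc (fun x : ℝ => x) H = H := cfc_id' ℝ H
  have mulH : ∀ f₁ f₂ : ℝ → ℝ, cfc f₁ H * cfc f₂ H = cfc (fun x => f₁ x * f₂ x) H :=
    fun f₁ f₂ => (cfc_mul f₁ f₂ H (hcont _) (hcont _)).symm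
  have mul_id : ∀ f : ℝ → ℝ, cfc f H * H = cfc (fun x => f x * x) H := by
    intro f
    have h2 := mulH f (fun x : ℝ => x)
    rw [hid] at h2
    exact h2
  have id_mul : ∀ f : ℝ → ℝ, H * cfc f H = cfc (fun x => x * f x) H := by
    intro f
    have h2 := mulH (fun x : ℝ => x) f
    rw [hid] at h2
    exact h2
  set q : ℝ → ℝ := fun x => Real.sqrt (Real.sqrt x) with hqdef
  set g : ℝ → ℝ := fun x => (Real.sqrt (Real.sqrt x))⁻¹ with hgdef
  set h : ℝ → ℝ := fun x => g x * q x with hhdef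
  set G := cfc g H with hGdef
  set Q := cfc q H with hQdef
  set P := cfc h H with hPdef
  have hGsa : Gᴴ = G := (cfc_predicate g H : IsSelfAdjoint (cfc g H))
  have hQsa : Qᴴ = Q := (cfc_predicate q H : IsSelfAdjoint (cfc q H))
  have hPsa : Pᴴ = P := (cfc_predicate h H : IsSelfAdjoint (cfc h H))
  have hpos : ∀ x : ℝ, 0 < x → h x = 1 := by
    intro x hx
    have : 0 < Real.sqrt (Real.sqrt x) := Real.sqrt_pos.mpr (Real.sqrt_pos.mpr hx)
    simp [hhdef, hgdef, hqdef, inv_mul_cancel₀ this.ne']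
  have h0 : h 0 = 0 := by simp [hhdef, hqdef, hgdef]
  have cfc_eqP : ∀ f : ℝ → ℝ, (∀ x, 0 < x → f x = 1) → f 0 = 0 → cfc f H = P := by
    intro f hf1 hf0
    apply cfc_congr
    intro x hx
    rcases (hspec x hx).eq_or_lt with rfl | hx'
    · simp [hf0, h0]
    · simp [hf1 x hx', hpos x hx']
  -- Step A
  have hPH : P * H = H := by
    rw [hPdef, mul_id h]
    conv_rhs => rw [← hid]
    apply cfc_congr
    intro x hx
    rcases (hspec x hx).eq_or_lt with rfl | hx'
    · simp
    · simp [hpos x hx']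
  have hHP : H * P = H := by
    rw [hPdef, id_mul h]
    conv_rhs => rw [← hid]
    apply cfc_congr
    intro x hx
    rcases (hspec x hx).eq_or_lt with rfl | hx'
    · simp
    · simp [hpos x hx']
  -- Step B : P * X = X
  have hPX : P * X = X := by
    have hN : (X - P * X) * (X - P * X)ᴴ = 0 := by
      rw [conjTranspose_sub, conjTranspose_mul, hPsa]
      rw [sub_mul, mul_sub, mul_sub]
      have e1 : X * Xᴴ = H := rfl
      have e2 : X * (Xᴴ * P) = H * P := by rw [← mul_assoc]
      have e3 : P * X * Xᴴ = P * H := by rw [mul_assoc]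
      have e4 : P * X * (Xᴴ * P) = P * H * P := by
        rw [mul_assoc, ← mul_assoc X Xᴴ P, e1, ← mul_assoc]
      rw [e1, e2, e3, e4, hHP, hPH, hHP]
      simp
    have h1 : (X - P * X)ᴴᴴ * (X - P * X)ᴴ = 0 := by rwa [conjTranspose_conjTranspose]
    have h2 : (X - P * X)ᴴ = 0 := Matrix.conjTranspose_mul_self_eq_zero.mp h1
    have h3 : X - P * X = 0 := by simpa using congrArg conjTranspose h2
    exact (sub_eq_zero.mp h3).symm
  have hXP : Xᴴ * P = Xᴴ := by
    have := congrArg conjTranspose hPX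
    rwa [conjTranspose_mul, hPsa] at this
  -- Step C
  have hGQ : G * Q = P := by rw [hGdef, hQdef, hPdef, mulH g q]
  have hQG : Q * G = P := by
    rw [hGdef, hQdef, hPdef, mulH q g]
    exact cfc_congr fun x _ => mul_comm _ _
  -- Step D : Q * Q = matAbs Xᴴ
  have hQQ : Q * Q = matAbs Xᴴ := by
    have hs : Q * Q = cfc (fun x : ℝ => Real.sqrt x) H := by
      rw [hQdef, mulH q q]
      exact cfc_congr fun x _ => Real.mul_self_sqrt (Real.sqrt_nonneg x)
    have hSpsd : (cfc (fun x : ℝ => Real.sqrt x) H).PosSemidef := by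
      have h5 : Qᴴ * Q = cfc (fun x : ℝ => Real.sqrt x) H := by rw [hQsa, hs]
      exact h5 ▸ Matrix.posSemidef_conjTranspose_mul_self Q
    have hsq : (cfc (fun x : ℝ => Real.sqrt x) H) ^ 2 = Xᴴᴴ * Xᴴ := by
      rw [sq, mulH]
      have h6 : cfc (fun x : ℝ => Real.sqrt x * Real.sqrt x) H = H := by
        conv_rhs => rw [← hid]
        exact cfc_congr fun x hx => Real.mul_self_sqrt (hspec x hx)
      rw [h6, conjTranspose_conjTranspose]
    rw [hs, matAbs]
    exact (matAbs_unique _ _ hSpsd hsq).symm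
  -- Step E : (G * X)ᴴ * (G * X) = matAbs X
  have hGX : (G * X)ᴴ * (G * X) = matAbs X := by
    have hKpsd : ((G * X)ᴴ * (G * X)).PosSemidef := Matrix.posSemidef_conjTranspose_mul_self _
    have hGGHGG : G * G * H * (G * G) = P := by
      rw [hGdef, mulH g g, mul_id (fun x => g x * g x),
        mulH (fun x => g x * g x * x) (fun x => g x * g x)]
      apply cfc_eqP
      · intro x hx
        have hq4 : q x * q x = Real.sqrt x := Real.mul_self_sqrt (Real.sqrt_nonneg x)
        have hgg : g x * g x = (Real.sqrt x)⁻¹ := by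
          rw [hgdef]
          simp only
          rw [← mul_inv]
          rw [show Real.sqrt (Real.sqrt x) * Real.sqrt (Real.sqrt x) = Real.sqrt x from
            Real.mul_self_sqrt (Real.sqrt_nonneg x)]
        have hsx : (0:ℝ) < Real.sqrt x := Real.sqrt_pos.mpr hx
        rw [hgg]
        have : (Real.sqrt x)⁻¹ * x * (Real.sqrt x)⁻¹
            = x / (Real.sqrt x * Real.sqrt x) := by ring
        rw [this, Real.mul_self_sqrt hx.le, div_self hx.ne']
      · simp [hgdef]
    have hsq : ((G * X)ᴴ * (G * X)) ^ 2 = Xᴴ * X := by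
      have expand : ((G * X)ᴴ * (G * X)) ^ 2
          = Xᴴ * (G * G * H * (G * G)) * X := by
        rw [sq, conjTranspose_mul, hGsa, hHdef]
        noncomm_ring
      rw [expand, hGGHGG, mul_assoc, hPX]
    rw [matAbs]
    exact (matAbs_unique _ _ hKpsd hsq).symm
  -- assemble
  have hDE : (G * X)ᴴ * (Q * W) = Xᴴ * W := by
    calc (G * X)ᴴ * (Q * W) = Xᴴ * P * W := by
          rw [conjTranspose_mul, hGsa, ← hGQ]; noncomm_ring
      _ = Xᴴ * W := by rw [hXP]
  have hED : (Q * W)ᴴ * (G * X) = Wᴴ * X := by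
    calc (Q * W)ᴴ * (G * X) = Wᴴ * (P * X) := by
          rw [conjTranspose_mul, hQsa, ← hQG]; noncomm_ring
      _ = Wᴴ * X := by rw [hPX]
  have hEE : (Q * W)ᴴ * (Q * W) = Wᴴ * matAbs Xᴴ * W := by
    calc (Q * W)ᴴ * (Q * W) = Wᴴ * (Q * Q) * W := by
          rw [conjTranspose_mul, hQsa]; noncomm_ring
      _ = Wᴴ * matAbs Xᴴ * W := by rw [hQQ]
  have main : (G * X - Q * W)ᴴ * (G * X - Q * W)
      = matAbs X + Wᴴ * matAbs Xᴴ * W - Xᴴ * W - Wᴴ * X := by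
    rw [conjTranspose_sub, sub_mul, mul_sub, mul_sub, hGX, hDE, hED, hEE]
    abel
  rw [← main]
  exact Matrix.posSemidef_conjTranspose_mul_self _

lemma half_smul_psd {n : ℕ} {M : Matrix (Fin n) (Fin n) ℂ} (hM : M.PosSemidef) :
    ((1/2 : ℂ) • M).PosSemidef := by
  constructor
  · have : ((1/2 : ℂ) • M)ᴴ = star (1/2 : ℂ) • Mᴴ := conjTranspose_smul _ _
    rw [Matrix.IsHermitian, this, hM.1.eq]
    norm_num
  · exact (hM.smul (show (0 : ℂ) ≤ 1 / 2 by norm_num [Complex.le_def])).2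


/-- If `X + Y = W|X+Y|` with `W` unitary, then
`|X+Y| ≤ (|X| + |Y| + W*(|X*| + |Y*|)W)/2` in the Loewner order. -/
theorem stmt5 {n : ℕ} (X Y W : Matrix (Fin n) (Fin n) ℂ)
    (hW : W ∈ Matrix.unitaryGroup (Fin n) ℂ)
    (hpolar : X + Y = W * matAbs (X + Y)) :
    ((1 / 2 : ℂ) • (matAbs X + matAbs Y + star W * (matAbs Xᴴ + matAbs Yᴴ) * W)
      - matAbs (X + Y)).PosSemidef := by
  have hWW : Wᴴ * W = 1 := by
    have := hW.1
    rwa [star_eq_conjTranspose] at this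
  have hApsd : (matAbs (X + Y)).PosSemidef :=
    matAbs_psd (X + Y)
  set A := matAbs (X + Y) with hAdef
  have hWA : Wᴴ * X + Wᴴ * Y = A := by
    rw [← mul_add, hpolar, ← mul_assoc, hWW, one_mul]
  have hAW : Xᴴ * W + Yᴴ * W = A := by
    have h1 : (X + Y)ᴴ = A * Wᴴ := by
      rw [hpolar, conjTranspose_mul, hApsd.1.eq]
    have h2 : (X + Y)ᴴ * W = A := by
      rw [h1, mul_assoc, hWW, mul_one]
    rw [← h2, conjTranspose_add, add_mul]
  have h3 : matAbs (X + Y)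
      = (1/2 : ℂ) • (Xᴴ * W + Yᴴ * W + (Wᴴ * X + Wᴴ * Y)) := by
    rw [hAW, hWA, smul_add, ← add_smul]
    norm_num
    exact hAdef.symm
  have key : ((matAbs X + Wᴴ * matAbs Xᴴ * W - Xᴴ * W - Wᴴ * X)
      + (matAbs Y + Wᴴ * matAbs Yᴴ * W - Yᴴ * W - Wᴴ * Y)).PosSemidef :=
    (matAbs_key X W).add (matAbs_key Y W)
  have target_eq : (1 / 2 : ℂ) • (matAbs X + matAbs Y + star W * (matAbs Xᴴ + matAbs Yᴴ) * W)
      - matAbs (X + Y)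
      = (1/2 : ℂ) • ((matAbs X + Wᴴ * matAbs Xᴴ * W - Xᴴ * W - Wᴴ * X)
        + (matAbs Y + Wᴴ * matAbs Yᴴ * W - Yᴴ * W - Wᴴ * Y)) := by
    rw [star_eq_conjTranspose, h3, ← smul_sub]
    congr 1
    rw [mul_add, add_mul]
    abel
  rw [target_eq]
  exact half_smul_psd key
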